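/- Fix n ∈ ℕ and real numbers α > 0, γ > 0, β ∈ ℝ. For ε > 0 set q = −e^ε, a = e^{ε(2α+1)}, b = e^{ε(2γ+1)}, φ = π/2 + 2εβ, and define the complex quantities A_n(ε) = (1−ab e^{2iφ}q^n)(1−a²q^n)(1−abq^n)(1−a²b²q^{n−1})/(a e^{iφ}(1+q)(1−a²b²q^{2n−1})(1−a²b²q^{2n})) and C_n(ε) = a e^{iφ}(1−q^n)(1−abq^{n−1})(1−b²q^{n−1})(1−ab e^{−2iφ}q^{n−1})/((1+q)(1−a²b²q^{2n−2})(1−a²b²q^{2n−1})). Then as ε → 0⁺, (1/2)·[(a e^{iφ}+a^{−1}e^{−iφ})/(1+q) − (A_n(ε)+C_n(ε))] converges to b_n^K(α,β,γ) and (1/4)·A_{n−1}(ε)·C_n(ε) converges to u_n^K(α,β,γ), where b_n^K = 2β − 2βn/(n+2α+2γ+1) for n even, b_n^K = 2β − 2β(n+4α+4γ+3)/(n+2α+2γ+2) for n odd, u_n^K = n(n+4α+4γ+2)·|n+2α+2γ+1+4iβ|²/(4(n+2α+2γ+1)²) for n even, and u_n^K = (n+4α+1)(n+4γ+1)(n+2α+2γ+1)²/(4(n+2α+2γ+1)²)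 for n odd. -/

import Mathlib

open Filter Complex

/-- The diagonal recurrence coefficient `bₙ` of the continuous `-1` Hahn polynomials
of the first type, parameters `(α,β,γ)`. -/
noncomputable def cM1Hahn1b (α β γ : ℝ) (n : ℕ) : ℝ :=
  if Even n then
    2 * β - 2 * β * (n : ℝ) / ((n : ℝ) + 2 * α + 2 * γ + 1)
  else
    2 * β - 2 * β * ((n : ℝ) + 4 * α + 4 * γ + 3) / ((n : ℝ) + 2 * α + 2 * γ + 2)

/-- The off-diagonal recurrence coefficient `uₙ` of the continuous `-1` Hahn polynomials
of the first type, parameters `(α,β,γ)`; `|z|²` is the squared modulus `Complex.normSq`. -/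
noncomputable def cM1Hahn1u (α β γ : ℝ) (n : ℕ) : ℝ :=
  if Even n then
    (n : ℝ) * ((n : ℝ) + 4 * α + 4 * γ + 2) *
        Complex.normSq (((n : ℝ) + 2 * α + 2 * γ + 1 : ℝ) + (4 * β : ℝ) * Complex.I) /
      (4 * ((n : ℝ) + 2 * α + 2 * γ + 1) ^ 2)
  else
    ((n : ℝ) + 4 * α + 1) * ((n : ℝ) + 4 * γ + 1) * ((n : ℝ) + 2 * α + 2 * γ + 1) ^ 2 /
      (4 * ((n : ℝ) + 2 * α + 2 * γ + 1) ^ 2)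

/-- The coefficient `Aₙ(ε)` of the continuous `q`-Hahn recurrence (with `a = c`, `b = d`),
`q = -e^ε`, `a = e^{ε(2α+1)}`, `b = e^{ε(2γ+1)}`, `φ = π/2 + 2εβ`. -/
noncomputable def cqHahnA (α β γ : ℝ) (n : ℕ) (ε : ℝ) : ℂ :=
  let q : ℂ := (-Real.exp ε : ℝ);
  let a : ℂ := (Real.exp (ε * (2 * α + 1)) : ℝ);
  let b : ℂ := (Real.exp (ε * (2 * γ + 1)) : ℝ);
  let φ : ℝ := Real.pi / 2 + 2 * ε * β;
  (1 - a * b * Complex.exp (2 * Complex.I * (φ : ℂ)) * q ^ n) * (1 - a ^ 2 * q ^ n) *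
      (1 - a * b * q ^ n) * (1 - a ^ 2 * b ^ 2 * q ^ (n - 1)) /
    (a * Complex.exp (Complex.I * (φ : ℂ)) * (1 + q) *
      (1 - a ^ 2 * b ^ 2 * q ^ (2 * n - 1)) * (1 - a ^ 2 * b ^ 2 * q ^ (2 * n)))

/-- The coefficient `Cₙ(ε)` of the continuous `q`-Hahn recurrence (with `a = c`, `b = d`),
same parametrization as `cqHahnA`. -/
noncomputable def cqHahnC (α β γ : ℝ) (n : ℕ) (ε : ℝ) : ℂ :=
  let q : ℂ := (-Real.exp ε : ℝ);
  let a : ℂ := (Real.exp (ε * (2 * α + 1)) : ℝ);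
  let b : ℂ := (Real.exp (ε * (2 * γ + 1)) : ℝ);
  let φ : ℝ := Real.pi / 2 + 2 * ε * β;
  a * Complex.exp (Complex.I * (φ : ℂ)) * (1 - q ^ n) * (1 - a * b * q ^ (n - 1)) *
      (1 - b ^ 2 * q ^ (n - 1)) *
      (1 - a * b * Complex.exp (-(2 * Complex.I * (φ : ℂ))) * q ^ (n - 1)) /
    ((1 + q) * (1 - a ^ 2 * b ^ 2 * q ^ (2 * n - 2)) * (1 - a ^ 2 * b ^ 2 * q ^ (2 * n - 1)))


section CqAux
open Topology
set_option maxHeartbeats 3000000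

lemma expI (ε β : ℝ) : Complex.exp (Complex.I * ((Real.pi/2 + 2*ε*β : ℝ):ℂ)) = Complex.I * Complex.exp ((ε:ℂ) * (2*β*Complex.I)) := by
  rw [show Complex.I * ((Real.pi/2 + 2*ε*β : ℝ):ℂ) = (Real.pi:ℂ)/2*Complex.I + (ε:ℂ)*(2*β*Complex.I) by push_cast; ring,
    Complex.exp_add]
  norm_num [Complex.exp_mul_I, Complex.cos_pi_div_two, Complex.sin_pi_div_two]

lemma expI2 (ε β : ℝ) : Complex.exp (2*Complex.I * ((Real.pi/2 + 2*ε*β : ℝ):ℂ)) = -Complex.exp ((ε:ℂ) * (4*β*Complex.I)) := by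
  rw [show 2*Complex.I * ((Real.pi/2 + 2*ε*β : ℝ):ℂ) = (Real.pi:ℂ)*Complex.I + (ε:ℂ)*(4*β*Complex.I) by push_cast; ring,
    Complex.exp_add]
  norm_num [Complex.exp_mul_I, Complex.cos_pi, Complex.sin_pi]

lemma expIneg (ε β : ℝ) : Complex.exp (-(Complex.I * ((Real.pi/2 + 2*ε*β : ℝ):ℂ))) = -Complex.I * Complex.exp ((ε:ℂ) * (-(2*β*Complex.I))) := by
  rw [Complex.exp_neg, expI, mul_inv, Complex.inv_I, ← Complex.exp_neg]
  ring_nf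

lemma expI2neg (ε β : ℝ) : Complex.exp (-(2*Complex.I * ((Real.pi/2 + 2*ε*β : ℝ):ℂ))) = -Complex.exp ((ε:ℂ) * (-(4*β*Complex.I))) := by
  rw [Complex.exp_neg, expI2, inv_neg, ← Complex.exp_neg, mul_neg]

lemma qpow_even (ε : ℝ) {m : ℕ} (h : Even m) : ((-Real.exp ε : ℝ) : ℂ) ^ m = Complex.exp ((ε:ℂ) * m) := by
  push_cast
  rw [h.neg_pow, ← Complex.exp_nat_mul]
  ring_nf

lemma qpow_odd (ε : ℝ) {m : ℕ} (h : Odd m) : ((-Real.exp ε : ℝ) : ℂ) ^ m = -Complex.exp ((ε:ℂ) * m) := by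
  push_cast
  rw [h.neg_pow, ← Complex.exp_nat_mul]
  ring_nf

lemma e2 (x : ℂ) : Complex.exp (x*2) = Complex.exp x ^ 2 := by
  rw [show (2:ℂ) = ((2:ℕ):ℂ) by norm_num, mul_comm, Complex.exp_nat_mul]
lemma e3 (x : ℂ) : Complex.exp (x*3) = Complex.exp x ^ 3 := by
  rw [show (3:ℂ) = ((3:ℕ):ℂ) by norm_num, mul_comm, Complex.exp_nat_mul]
lemma e4 (x : ℂ) : Complex.exp (x*4) = Complex.exp x ^ 4 := by
  rw [show (4:ℂ) = ((4:ℕ):ℂ) by norm_num, mul_comm, Complex.exp_nat_mul]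
lemma e5 (x : ℂ) : Complex.exp (x*5) = Complex.exp x ^ 5 := by
  rw [show (5:ℂ) = ((5:ℕ):ℂ) by norm_num, mul_comm, Complex.exp_nat_mul]
lemma e6 (x : ℂ) : Complex.exp (x*6) = Complex.exp x ^ 6 := by
  rw [show (6:ℂ) = ((6:ℕ):ℂ) by norm_num, mul_comm, Complex.exp_nat_mul]
lemma e7 (x : ℂ) : Complex.exp (x*7) = Complex.exp x ^ 7 := by
  rw [show (7:ℂ) = ((7:ℕ):ℂ) by norm_num, mul_comm, Complex.exp_nat_mul]
lemma e8 (x : ℂ) : Complex.exp (x*8) = Complex.exp x ^ 8 := by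
  rw [show (8:ℂ) = ((8:ℕ):ℂ) by norm_num, mul_comm, Complex.exp_nat_mul]
lemma e9 (x : ℂ) : Complex.exp (x*9) = Complex.exp x ^ 9 := by
  rw [show (9:ℂ) = ((9:ℕ):ℂ) by norm_num, mul_comm, Complex.exp_nat_mul]
lemma e10 (x : ℂ) : Complex.exp (x*10) = Complex.exp x ^ 10 := by
  rw [show (10:ℂ) = ((10:ℕ):ℂ) by norm_num, mul_comm, Complex.exp_nat_mul]
lemma e11 (x : ℂ) : Complex.exp (x*11) = Complex.exp x ^ 11 := by
  rw [show (11:ℂ) = ((11:ℕ):ℂ) by norm_num, mul_comm, Complex.exp_nat_mul]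
lemma e12 (x : ℂ) : Complex.exp (x*12) = Complex.exp x ^ 12 := by
  rw [show (12:ℂ) = ((12:ℕ):ℂ) by norm_num, mul_comm, Complex.exp_nat_mul]








set_option maxHeartbeats 2000000 in
lemma A_even (α β γ ε : ℝ) (k : ℕ) :
    cqHahnA α β γ (2*k+2) ε =
      ((1 - Complex.exp ((ε:ℂ) * (2*(k:ℂ)+2 + 4*α + 2))) / (1 - Complex.exp ((ε:ℂ) * 1))) *
      ((1 - Complex.exp ((ε:ℂ) * (2*(k:ℂ)+2 + 2*α + 2*γ + 2))) / (1 - Complex.exp ((ε:ℂ) * (4*(k:ℂ)+4 + 4*α + 4*γ + 4)))) *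
      ((1 + Complex.exp ((ε:ℂ) * (2*(k:ℂ)+2 + 2*α + 2*γ + 2 + 4*β*Complex.I))) * (1 + Complex.exp ((ε:ℂ) * (2*(k:ℂ)+1 + 4*α + 4*γ + 4))) /
        (Complex.I * Complex.exp ((ε:ℂ) * (2*α+1+2*β*Complex.I)) * (1 + Complex.exp ((ε:ℂ) * (4*(k:ℂ)+3 + 4*α + 4*γ + 4))))) := by
  have h1 : Even (2*k+2) := ⟨k+1, by ring⟩
  have h2 : Odd (2*k+1) := ⟨k, by ring⟩
  have h3 : Odd (4*k+3) := ⟨2*k+1, by ring⟩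
  have h4 : Even (4*k+4) := ⟨2*k+2, by ring⟩
  simp only [cqHahnA]
  rw [show 2*k+2-1 = 2*k+1 from rfl, show 2*(2*k+2)-1 = 4*k+3 from by omega,
      show 2*(2*k+2) = 4*k+4 from by omega,
      qpow_even ε h1, qpow_odd ε h2, qpow_odd ε h3, qpow_even ε h4, expI ε β, expI2 ε β]
  rw [div_mul_div_comm, div_mul_div_comm]
  congr 1 <;>
  · push_cast
    ring_nf
    simp only [Complex.exp_zero, Complex.exp_add, Complex.exp_sub, Complex.exp_neg, e2, e3, e4, e5, e6, e7, e8, e9, e10, e11, e12]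
    ring

set_option maxHeartbeats 2000000 in
lemma A_odd (α β γ ε : ℝ) (k : ℕ) :
    cqHahnA α β γ (2*k+1) ε =
      ((1 - Complex.exp ((ε:ℂ) * (2*(k:ℂ)+1 + 2*α + 2*γ + 2 + 4*β*Complex.I))) / (1 - Complex.exp ((ε:ℂ) * 1))) *
      ((1 - Complex.exp ((ε:ℂ) * (2*(k:ℂ) + 4*α + 4*γ + 4))) / (1 - Complex.exp ((ε:ℂ) * (4*(k:ℂ)+2 + 4*α + 4*γ + 4)))) *
      ((1 + Complex.exp ((ε:ℂ) * (2*(k:ℂ)+1 + 4*α + 2))) * (1 + Complex.exp ((ε:ℂ) * (2*(k:ℂ)+1 + 2*α + 2*γ + 2))) /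
        (Complex.I * Complex.exp ((ε:ℂ) * (2*α+1+2*β*Complex.I)) * (1 + Complex.exp ((ε:ℂ) * (4*(k:ℂ)+1 + 4*α + 4*γ + 4))))) := by
  have h1 : Odd (2*k+1) := ⟨k, by ring⟩
  have h2 : Even (2*k) := ⟨k, by ring⟩
  have h3 : Odd (4*k+1) := ⟨2*k, by ring⟩
  have h4 : Even (4*k+2) := ⟨2*k+1, by ring⟩
  simp only [cqHahnA]
  rw [show 2*k+1-1 = 2*k from rfl, show 2*(2*k+1)-1 = 4*k+1 from by omega,
      show 2*(2*k+1) = 4*k+2 from by omega,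
      qpow_odd ε h1, qpow_even ε h2, qpow_odd ε h3, qpow_even ε h4, expI ε β, expI2 ε β]
  rw [div_mul_div_comm, div_mul_div_comm]
  congr 1 <;>
  · push_cast
    ring_nf
    simp only [Complex.exp_zero, Complex.exp_add, Complex.exp_sub, Complex.exp_neg, e2, e3, e4, e5, e6, e7, e8, e9, e10, e11, e12]
    ring

set_option maxHeartbeats 2000000 in
lemma A_zero (α β γ ε : ℝ) :
    cqHahnA α β γ 0 ε =
      ((1 - Complex.exp ((ε:ℂ) * (4*α + 2))) / (1 - Complex.exp ((ε:ℂ) * 1))) *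
      ((1 - Complex.exp ((ε:ℂ) * (2*α + 2*γ + 2))) / (1 - Complex.exp ((ε:ℂ) * (4*α + 4*γ + 4)))) *
      ((1 - Complex.exp ((ε:ℂ) * (4*α + 4*γ + 4))) / (1 - Complex.exp ((ε:ℂ) * (4*α + 4*γ + 4)))) *
      ((1 + Complex.exp ((ε:ℂ) * (2*α + 2*γ + 2 + 4*β*Complex.I))) /
        (Complex.I * Complex.exp ((ε:ℂ) * (2*α+1+2*β*Complex.I)))) := by
  simp only [cqHahnA]
  rw [show 2*(0:ℕ) = 0 from rfl, qpow_even ε (Even.zero), expI ε β, expI2 ε β]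
  rw [div_mul_div_comm, div_mul_div_comm, div_mul_div_comm]
  congr 1 <;>
  · push_cast
    ring_nf
    simp only [Complex.exp_zero, Complex.exp_add, Complex.exp_sub, Complex.exp_neg, e2, e3, e4, e5, e6, e7, e8, e9, e10, e11, e12]
    ring

set_option maxHeartbeats 2000000 in
lemma C_even (α β γ ε : ℝ) (k : ℕ) :
    cqHahnC α β γ (2*k+2) ε =
      (Complex.I * Complex.exp ((ε:ℂ) * (2*α+1+2*β*Complex.I))) *
      (((1 - Complex.exp ((ε:ℂ) * (2*(k:ℂ)+2))) / (1 - Complex.exp ((ε:ℂ) * 1))) *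
      (((1 - Complex.exp ((ε:ℂ) * (2*(k:ℂ)+3 + 2*α + 2*γ - 4*β*Complex.I))) / (1 - Complex.exp ((ε:ℂ) * (4*(k:ℂ)+6 + 4*α + 4*γ)))) *
      ((1 + Complex.exp ((ε:ℂ) * (2*(k:ℂ)+3 + 2*α + 2*γ))) * (1 + Complex.exp ((ε:ℂ) * (2*(k:ℂ)+3 + 4*γ))) /
        (1 + Complex.exp ((ε:ℂ) * (4*(k:ℂ)+7 + 4*α + 4*γ)))))) := by
  have h1 : Even (2*k+2) := ⟨k+1, by ring⟩
  have h2 : Odd (2*k+1) := ⟨k, by ring⟩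
  have h3 : Even (4*k+2) := ⟨2*k+1, by ring⟩
  have h4 : Odd (4*k+3) := ⟨2*k+1, by ring⟩
  simp only [cqHahnC]
  rw [show 2*k+2-1 = 2*k+1 from rfl, show 2*(2*k+2)-2 = 4*k+2 from by omega,
      show 2*(2*k+2)-1 = 4*k+3 from by omega,
      qpow_even ε h1, qpow_odd ε h2, qpow_even ε h3, qpow_odd ε h4, expI ε β, expI2neg ε β]
  rw [mul_div_assoc, div_mul_div_comm, div_mul_div_comm, ← mul_div_assoc]
  congr 1 <;>
  · push_cast
    ring_nf
    simp only [Complex.exp_zero, Complex.exp_add, Complex.exp_sub, Complex.exp_neg, e2, e3, e4, e5, e6, e7, e8, e9, e10, e11, e12]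
    ring

set_option maxHeartbeats 2000000 in
lemma C_odd (α β γ ε : ℝ) (k : ℕ) :
    cqHahnC α β γ (2*k+1) ε =
      (Complex.I * Complex.exp ((ε:ℂ) * (2*α+1+2*β*Complex.I))) *
      (((1 - Complex.exp ((ε:ℂ) * (2*(k:ℂ)+2 + 2*α + 2*γ))) / (1 - Complex.exp ((ε:ℂ) * 1))) *
      (((1 - Complex.exp ((ε:ℂ) * (2*(k:ℂ)+2 + 4*γ))) / (1 - Complex.exp ((ε:ℂ) * (4*(k:ℂ)+4 + 4*α + 4*γ)))) *
      ((1 + Complex.exp ((ε:ℂ) * (2*(k:ℂ)+1))) * (1 + Complex.exp ((ε:ℂ) * (2*(k:ℂ)+2 + 2*α + 2*γ - 4*β*Complex.I))) /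
        (1 + Complex.exp ((ε:ℂ) * (4*(k:ℂ)+5 + 4*α + 4*γ)))))) := by
  have h1 : Odd (2*k+1) := ⟨k, by ring⟩
  have h2 : Even (2*k) := ⟨k, by ring⟩
  have h3 : Even (4*k) := ⟨2*k, by ring⟩
  have h4 : Odd (4*k+1) := ⟨2*k, by ring⟩
  simp only [cqHahnC]
  rw [show 2*k+1-1 = 2*k from rfl, show 2*(2*k+1)-2 = 4*k from by omega,
      show 2*(2*k+1)-1 = 4*k+1 from by omega,
      qpow_odd ε h1, qpow_even ε h2, qpow_even ε h3, qpow_odd ε h4, expI ε β, expI2neg ε β]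
  rw [mul_div_assoc, div_mul_div_comm, div_mul_div_comm, ← mul_div_assoc]
  congr 1 <;>
  · push_cast
    ring_nf
    simp only [Complex.exp_zero, Complex.exp_add, Complex.exp_sub, Complex.exp_neg, e2, e3, e4, e5, e6, e7, e8, e9, e10, e11, e12]
    ring

lemma C_zero (α β γ ε : ℝ) : cqHahnC α β γ 0 ε = 0 := by
  simp [cqHahnC]

set_option maxHeartbeats 2000000 in
lemma T0_eq (α β ε : ℝ) :
    (((Real.exp (ε*(2*α+1)) : ℝ) : ℂ) * Complex.exp (Complex.I * ((Real.pi/2 + 2*ε*β : ℝ):ℂ)) +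
      (((Real.exp (ε*(2*α+1)) : ℝ) : ℂ))⁻¹ * Complex.exp (-(Complex.I * ((Real.pi/2 + 2*ε*β : ℝ):ℂ)))) /
      (1 + ((-Real.exp ε : ℝ):ℂ)) =
    (Complex.I * Complex.exp ((ε:ℂ) * (2*α+1+2*β*Complex.I)) -
      Complex.I * Complex.exp ((ε:ℂ) * (-(2*α+1+2*β*Complex.I)))) / (1 - Complex.exp ((ε:ℂ)*1)) := by
  rw [expI ε β, expIneg ε β]
  congr 1 <;>
  · push_cast
    ring_nf
    try simp only [Complex.exp_zero, Complex.exp_add, Complex.exp_sub, Complex.exp_neg, e2, e3, e4, e5, e6, e7, e8, e9, e10, e11, e12]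
    try ring

lemma I3 : Complex.I ^ 3 = -Complex.I := by
  rw [pow_succ, Complex.I_sq]; ring

lemma I4 : Complex.I ^ 4 = 1 := by
  rw [pow_succ, I3]; simp

lemma limE (c : ℂ) : Tendsto (fun ε : ℝ => Complex.exp ((ε:ℂ) * c)) (𝓝[>] (0:ℝ)) (𝓝 1) := by
  have h : Continuous fun ε : ℝ => Complex.exp ((ε:ℂ)*c) := by continuity
  have := ((h.tendsto 0).mono_left (nhdsWithin_le_nhds (s := Set.Ioi (0:ℝ))))
  simpa using this

lemma limM (c : ℂ) : Tendsto (fun ε : ℝ => (1 - Complex.exp ((ε:ℂ) * c)) / (ε:ℂ)) (𝓝[>] (0:ℝ)) (𝓝 (-c)) := by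
  have hd : HasDerivAt (fun z : ℂ => 1 - Complex.exp (z * c)) (-c) 0 := by
    have := (((hasDerivAt_id (0:ℂ)).mul_const c).cexp)
    simpa using (this.const_sub 1)
  have h2 : HasDerivAt (fun ε : ℝ => 1 - Complex.exp ((ε:ℂ) * c)) (-c) 0 := by
    exact_mod_cast hd.comp_ofReal
  have hsub : Set.Ioi (0:ℝ) ⊆ {(0:ℝ)}ᶜ := by intro x hx; simpa using ne_of_gt hx
  have h3 := (hasDerivAt_iff_tendsto_slope.mp h2).mono_left (nhdsWithin_mono _ hsub)
  refine h3.congr fun ε => ?_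
  simp [slope, Complex.real_smul, div_eq_inv_mul]

lemma limP (c : ℂ) : Tendsto (fun ε : ℝ => 1 + Complex.exp ((ε:ℂ) * c)) (𝓝[>] (0:ℝ)) (𝓝 2) := by
  have := (limE c).const_add 1
  norm_num at this
  exact this

lemma limR (c d : ℂ) (hd : d ≠ 0) :
    Tendsto (fun ε : ℝ => (1 - Complex.exp ((ε:ℂ) * c)) / (1 - Complex.exp ((ε:ℂ) * d)))
      (𝓝[>] (0:ℝ)) (𝓝 (c/d)) := by
  have h := (limM c).div (limM d) (by simpa using hd)
  rw [neg_div_neg_eq] at h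
  refine Filter.Tendsto.congr' ?_ h
  filter_upwards [self_mem_nhdsWithin] with ε hε
  have hε' : (ε:ℂ) ≠ 0 := by exact_mod_cast (ne_of_gt hε)
  simp only [Pi.div_apply]
  rw [div_div_div_comm, div_self hε', div_one]

lemma creal_ne (x : ℝ) (z : ℂ) (h : (x:ℂ) = z) (hx : 0 < x) : z ≠ 0 := by
  rw [← h]; exact_mod_cast hx.ne'

variable {α β γ : ℝ}

lemma limA_even (hα : 0 < α) (hγ : 0 < γ) (β : ℝ) (k : ℕ) :
    Tendsto (fun ε : ℝ => cqHahnA α β γ (2*k+2) ε) (𝓝[>] (0:ℝ))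
      (𝓝 (-Complex.I * (2*(k:ℂ)+2+4*α+2))) := by
  refine Filter.Tendsto.congr (fun ε => (A_even α β γ ε k).symm) ?_
  have hd2 : (4*(k:ℂ)+4 + 4*(α:ℂ) + 4*(γ:ℂ) + 4) ≠ 0 :=
    creal_ne (4*(k:ℝ)+4+4*α+4*γ+4) _ (by push_cast; ring) (by positivity)
  have h := ((limR (2*(k:ℂ)+2+4*α+2) 1 one_ne_zero).mul
      (limR (2*(k:ℂ)+2+2*α+2*γ+2) _ hd2)).mul
    (((limP (2*(k:ℂ)+2+2*α+2*γ+2+4*β*Complex.I)).mul (limP (2*(k:ℂ)+1+4*α+4*γ+4))).div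
      (((tendsto_const_nhds (x := Complex.I)).mul (limE (2*(α:ℂ)+1+2*β*Complex.I))).mul
        (limP (4*(k:ℂ)+3+4*α+4*γ+4))) (by simp [Complex.I_ne_zero]))
  convert h using 2
  · rfl
  field_simp (disch := first | exact Complex.I_ne_zero | (norm_cast; positivity) | assumption)
  ring_nf
  try simp only [Complex.I_sq, I3, I4]
  try ring_nf
  try ring

lemma limA_odd (hα : 0 < α) (hγ : 0 < γ) (β : ℝ) (k : ℕ) :
    Tendsto (fun ε : ℝ => cqHahnA α β γ (2*k+1) ε) (𝓝[>] (0:ℝ))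
      (𝓝 (-Complex.I * ((2*(k:ℂ)+2*α+2*γ+3) + 4*β*Complex.I) * (2*(k:ℂ)+4*α+4*γ+4) / (2*(k:ℂ)+2*α+2*γ+3))) := by
  refine Filter.Tendsto.congr (fun ε => (A_odd α β γ ε k).symm) ?_
  have hd2 : (4*(k:ℂ)+2 + 4*(α:ℂ) + 4*(γ:ℂ) + 4) ≠ 0 :=
    creal_ne (4*(k:ℝ)+2+4*α+4*γ+4) _ (by push_cast; ring) (by positivity)
  have hT : (2*(k:ℂ)+2*(α:ℂ)+2*(γ:ℂ)+3) ≠ 0 :=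
    creal_ne (2*(k:ℝ)+2*α+2*γ+3) _ (by push_cast; ring) (by positivity)
  have h := ((limR (2*(k:ℂ)+1+2*α+2*γ+2+4*β*Complex.I) 1 one_ne_zero).mul
      (limR (2*(k:ℂ)+4*α+4*γ+4) _ hd2)).mul
    (((limP (2*(k:ℂ)+1+4*α+2)).mul (limP (2*(k:ℂ)+1+2*α+2*γ+2))).div
      (((tendsto_const_nhds (x := Complex.I)).mul (limE (2*(α:ℂ)+1+2*β*Complex.I))).mul
        (limP (4*(k:ℂ)+1+4*α+4*γ+4))) (by simp [Complex.I_ne_zero]))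
  convert h using 2
  · rfl
  field_simp (disch := first | exact Complex.I_ne_zero | (norm_cast; positivity) | assumption)
  ring_nf
  try simp only [Complex.I_sq, I3, I4]
  try ring_nf
  try ring

lemma limA_zero (hα : 0 < α) (hγ : 0 < γ) (β : ℝ) :
    Tendsto (fun ε : ℝ => cqHahnA α β γ 0 ε) (𝓝[>] (0:ℝ))
      (𝓝 (-Complex.I * (4*(α:ℂ)+2))) := by
  refine Filter.Tendsto.congr (fun ε => (A_zero α β γ ε).symm) ?_
  have hd2 : (4*(α:ℂ) + 4*(γ:ℂ) + 4) ≠ 0 :=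
    creal_ne (4*α+4*γ+4) _ (by push_cast; ring) (by positivity)
  have h := (((limR (4*(α:ℂ)+2) 1 one_ne_zero).mul
      (limR (2*(α:ℂ)+2*γ+2) _ hd2)).mul (limR (4*(α:ℂ)+4*γ+4) _ hd2)).mul
    ((limP (2*(α:ℂ)+2*γ+2+4*β*Complex.I)).div
      ((tendsto_const_nhds (x := Complex.I)).mul (limE (2*(α:ℂ)+1+2*β*Complex.I)))
      (by simp [Complex.I_ne_zero]))
  convert h using 2
  · rfl
  field_simp (disch := first | exact Complex.I_ne_zero | (norm_cast; positivity) | assumption)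
  ring_nf
  try simp only [Complex.I_sq, I3, I4]
  try ring_nf
  try ring

lemma limC_even (hα : 0 < α) (hγ : 0 < γ) (β : ℝ) (k : ℕ) :
    Tendsto (fun ε : ℝ => cqHahnC α β γ (2*k+2) ε) (𝓝[>] (0:ℝ))
      (𝓝 (Complex.I * (2*(k:ℂ)+2) * ((2*(k:ℂ)+2*α+2*γ+3) - 4*β*Complex.I) / (2*(k:ℂ)+2*α+2*γ+3))) := by
  refine Filter.Tendsto.congr (fun ε => (C_even α β γ ε k).symm) ?_
  have hd1 : (4*(k:ℂ)+6 + 4*(α:ℂ) + 4*(γ:ℂ)) ≠ 0 :=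
    creal_ne (4*(k:ℝ)+6+4*α+4*γ) _ (by push_cast; ring) (by positivity)
  have hT : (2*(k:ℂ)+2*(α:ℂ)+2*(γ:ℂ)+3) ≠ 0 :=
    creal_ne (2*(k:ℝ)+2*α+2*γ+3) _ (by push_cast; ring) (by positivity)
  have h := ((tendsto_const_nhds (x := Complex.I)).mul (limE (2*(α:ℂ)+1+2*β*Complex.I))).mul
    ((limR (2*(k:ℂ)+2) 1 one_ne_zero).mul
      ((limR (2*(k:ℂ)+3+2*α+2*γ-4*β*Complex.I) _ hd1).mul
        (((limP (2*(k:ℂ)+3+2*α+2*γ)).mul (limP (2*(k:ℂ)+3+4*γ))).div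
          (limP (4*(k:ℂ)+7+4*α+4*γ)) two_ne_zero)))
  convert h using 2
  · rfl
  field_simp (disch := first | exact Complex.I_ne_zero | (norm_cast; positivity) | assumption)
  ring_nf
  try simp only [Complex.I_sq, I3, I4]
  try ring_nf
  try ring

lemma limC_odd (hα : 0 < α) (hγ : 0 < γ) (β : ℝ) (k : ℕ) :
    Tendsto (fun ε : ℝ => cqHahnC α β γ (2*k+1) ε) (𝓝[>] (0:ℝ))
      (𝓝 (Complex.I * (2*(k:ℂ)+4*γ+2))) := by
  refine Filter.Tendsto.congr (fun ε => (C_odd α β γ ε k).symm) ?_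
  have hd1 : (4*(k:ℂ)+4 + 4*(α:ℂ) + 4*(γ:ℂ)) ≠ 0 :=
    creal_ne (4*(k:ℝ)+4+4*α+4*γ) _ (by push_cast; ring) (by positivity)
  have hT : (2*(k:ℂ)+2+2*(α:ℂ)+2*(γ:ℂ)) ≠ 0 :=
    creal_ne (2*(k:ℝ)+2+2*α+2*γ) _ (by push_cast; ring) (by positivity)
  have h := ((tendsto_const_nhds (x := Complex.I)).mul (limE (2*(α:ℂ)+1+2*β*Complex.I))).mul
    ((limR (2*(k:ℂ)+2+2*α+2*γ) 1 one_ne_zero).mul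
      ((limR (2*(k:ℂ)+2+4*γ) _ hd1).mul
        (((limP (2*(k:ℂ)+1)).mul (limP (2*(k:ℂ)+2+2*α+2*γ-4*β*Complex.I))).div
          (limP (4*(k:ℂ)+5+4*α+4*γ)) two_ne_zero)))
  convert h using 2
  · rfl
  field_simp (disch := first | exact Complex.I_ne_zero | (norm_cast; positivity) | assumption)
  ring_nf
  try simp only [Complex.I_sq, I3, I4]
  try ring_nf
  try ring

lemma limC_zero (β : ℝ) :
    Tendsto (fun ε : ℝ => cqHahnC α β γ 0 ε) (𝓝[>] (0:ℝ)) (𝓝 0) := by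
  simpa [C_zero] using (tendsto_const_nhds : Tendsto (fun _ : ℝ => (0:ℂ)) (𝓝[>] (0:ℝ)) (𝓝 0))

lemma limT0 (α β : ℝ) :
    Tendsto (fun ε : ℝ => (Complex.I * Complex.exp ((ε:ℂ) * (2*α+1+2*β*Complex.I)) -
      Complex.I * Complex.exp ((ε:ℂ) * (-(2*α+1+2*β*Complex.I)))) / (1 - Complex.exp ((ε:ℂ)*1)))
      (𝓝[>] (0:ℝ)) (𝓝 (-2*Complex.I*(2*(α:ℂ)+1+2*β*Complex.I))) := by
  have h := ((tendsto_const_nhds (x := Complex.I)).mul (limR (-(2*(α:ℂ)+1+2*β*Complex.I)) 1 one_ne_zero)).sub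
    ((tendsto_const_nhds (x := Complex.I)).mul (limR (2*(α:ℂ)+1+2*β*Complex.I) 1 one_ne_zero))
  have h2 : Tendsto (fun ε : ℝ =>
      Complex.I * ((1 - Complex.exp ((ε:ℂ) * (-(2*α+1+2*β*Complex.I)))) / (1 - Complex.exp ((ε:ℂ)*1))) -
      Complex.I * ((1 - Complex.exp ((ε:ℂ) * (2*α+1+2*β*Complex.I))) / (1 - Complex.exp ((ε:ℂ)*1))))
      (𝓝[>] (0:ℝ)) (𝓝 (-2*Complex.I*(2*(α:ℂ)+1+2*β*Complex.I))) := by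
    convert h using 2
    field_simp
    ring
  refine Filter.Tendsto.congr (fun ε => ?_) h2
  ring

variable {α β γ : ℝ}
lemma part1_even (hα : 0 < α) (hγ : 0 < γ) (β : ℝ) (k : ℕ) :
    Tendsto (fun ε : ℝ =>
      (1/2 : ℂ) * ((((Real.exp (ε*(2*α+1)) : ℝ) : ℂ) * Complex.exp (Complex.I * ((Real.pi/2 + 2*ε*β : ℝ):ℂ)) +
        (((Real.exp (ε*(2*α+1)) : ℝ) : ℂ))⁻¹ * Complex.exp (-(Complex.I * ((Real.pi/2 + 2*ε*β : ℝ):ℂ)))) /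
        (1 + ((-Real.exp ε : ℝ):ℂ)) - (cqHahnA α β γ (2*k+2) ε + cqHahnC α β γ (2*k+2) ε)))
      (𝓝[>] (0:ℝ)) (𝓝 ((cM1Hahn1b α β γ (2*k+2) : ℝ) : ℂ)) := by
  have h := ((limT0 α β).sub ((limA_even hα hγ β k).add (limC_even hα hγ β k))).const_mul (1/2 : ℂ)
  have hT : (2*(k:ℂ)+2*(α:ℂ)+2*(γ:ℂ)+3) ≠ 0 :=
    creal_ne (2*(k:ℝ)+2*α+2*γ+3) _ (by push_cast; ring) (by positivity)
  have hv : ((cM1Hahn1b α β γ (2*k+2) : ℝ) : ℂ) =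
      (1/2 : ℂ) * (-2*Complex.I*(2*(α:ℂ)+1+2*β*Complex.I) -
        (-Complex.I * (2*(k:ℂ)+2+4*α+2) +
         Complex.I * (2*(k:ℂ)+2) * ((2*(k:ℂ)+2*α+2*γ+3) - 4*β*Complex.I) / (2*(k:ℂ)+2*α+2*γ+3))) := by
    rw [cM1Hahn1b, if_pos ⟨k+1, by ring⟩]
    have hT' : (2*(k:ℝ)+2*α+2*γ+3) ≠ 0 := by positivity
    have hT2 : (2*(k:ℂ)+2+2*(α:ℂ)+2*(γ:ℂ)+1) ≠ 0 :=
      creal_ne (2*(k:ℝ)+2+2*α+2*γ+1) _ (by push_cast; ring) (by positivity)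
    push_cast
    apply Complex.ext <;> simp [Complex.div_re, Complex.div_im, Complex.normSq] <;> field_simp <;> ring
  rw [hv]
  refine Filter.Tendsto.congr (fun ε => ?_) h
  rw [T0_eq α β ε]

lemma part1_odd (hα : 0 < α) (hγ : 0 < γ) (β : ℝ) (k : ℕ) :
    Tendsto (fun ε : ℝ =>
      (1/2 : ℂ) * ((((Real.exp (ε*(2*α+1)) : ℝ) : ℂ) * Complex.exp (Complex.I * ((Real.pi/2 + 2*ε*β : ℝ):ℂ)) +
        (((Real.exp (ε*(2*α+1)) : ℝ) : ℂ))⁻¹ * Complex.exp (-(Complex.I * ((Real.pi/2 + 2*ε*β : ℝ):ℂ)))) /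
        (1 + ((-Real.exp ε : ℝ):ℂ)) - (cqHahnA α β γ (2*k+1) ε + cqHahnC α β γ (2*k+1) ε)))
      (𝓝[>] (0:ℝ)) (𝓝 ((cM1Hahn1b α β γ (2*k+1) : ℝ) : ℂ)) := by
  have h := ((limT0 α β).sub ((limA_odd hα hγ β k).add (limC_odd hα hγ β k))).const_mul (1/2 : ℂ)
  have hT : (2*(k:ℂ)+2*(α:ℂ)+2*(γ:ℂ)+3) ≠ 0 :=
    creal_ne (2*(k:ℝ)+2*α+2*γ+3) _ (by push_cast; ring) (by positivity)
  have hv : ((cM1Hahn1b α β γ (2*k+1) : ℝ) : ℂ) =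
      (1/2 : ℂ) * (-2*Complex.I*(2*(α:ℂ)+1+2*β*Complex.I) -
        (-Complex.I * ((2*(k:ℂ)+2*α+2*γ+3) + 4*β*Complex.I) * (2*(k:ℂ)+4*α+4*γ+4) / (2*(k:ℂ)+2*α+2*γ+3) +
         Complex.I * (2*(k:ℂ)+4*γ+2))) := by
    rw [cM1Hahn1b, if_neg (by rw [Nat.even_iff]; omega)]
    have hT' : (2*(k:ℝ)+2*α+2*γ+3) ≠ 0 := by positivity
    have hT3 : (2*(k:ℂ)+1+2*(α:ℂ)+2*(γ:ℂ)+2) ≠ 0 :=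
      creal_ne (2*(k:ℝ)+1+2*α+2*γ+2) _ (by push_cast; ring) (by positivity)
    push_cast
    apply Complex.ext <;> simp [Complex.div_re, Complex.div_im, Complex.normSq] <;> field_simp <;> ring
  rw [hv]
  refine Filter.Tendsto.congr (fun ε => ?_) h
  rw [T0_eq α β ε]

lemma part1_zero (hα : 0 < α) (hγ : 0 < γ) (β : ℝ) :
    Tendsto (fun ε : ℝ =>
      (1/2 : ℂ) * ((((Real.exp (ε*(2*α+1)) : ℝ) : ℂ) * Complex.exp (Complex.I * ((Real.pi/2 + 2*ε*β : ℝ):ℂ)) +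
        (((Real.exp (ε*(2*α+1)) : ℝ) : ℂ))⁻¹ * Complex.exp (-(Complex.I * ((Real.pi/2 + 2*ε*β : ℝ):ℂ)))) /
        (1 + ((-Real.exp ε : ℝ):ℂ)) - (cqHahnA α β γ 0 ε + cqHahnC α β γ 0 ε)))
      (𝓝[>] (0:ℝ)) (𝓝 ((cM1Hahn1b α β γ 0 : ℝ) : ℂ)) := by
  have h := ((limT0 α β).sub ((limA_zero hα hγ β).add (limC_zero (α := α) (γ := γ) β))).const_mul (1/2 : ℂ)
  have hv : ((cM1Hahn1b α β γ 0 : ℝ) : ℂ) =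
      (1/2 : ℂ) * (-2*Complex.I*(2*(α:ℂ)+1+2*β*Complex.I) - (-Complex.I * (4*(α:ℂ)+2) + 0)) := by
    rw [cM1Hahn1b, if_pos Even.zero]
    have hT' : ((0:ℝ)+2*α+2*γ+1) ≠ 0 := by positivity
    push_cast
    field_simp
    ring_nf
    try simp only [Complex.I_sq, I3, I4]
    try ring_nf
    try ring
  rw [hv]
  refine Filter.Tendsto.congr (fun ε => ?_) h
  rw [T0_eq α β ε]

lemma part2_even (hα : 0 < α) (hγ : 0 < γ) (β : ℝ) (j : ℕ) :
    Tendsto (fun ε : ℝ => (1/4 : ℂ) * cqHahnA α β γ (2*j+1) ε * cqHahnC α β γ (2*j+2) ε)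
      (𝓝[>] (0:ℝ)) (𝓝 ((cM1Hahn1u α β γ (2*j+2) : ℝ) : ℂ)) := by
  have h := ((limA_odd hα hγ β j).const_mul (1/4 : ℂ)).mul (limC_even hα hγ β j)
  have hT : (2*(j:ℂ)+2*(α:ℂ)+2*(γ:ℂ)+3) ≠ 0 :=
    creal_ne (2*(j:ℝ)+2*α+2*γ+3) _ (by push_cast; ring) (by positivity)
  have hv : ((cM1Hahn1u α β γ (2*j+2) : ℝ) : ℂ) =
      (1/4 : ℂ) * (-Complex.I * ((2*(j:ℂ)+2*α+2*γ+3) + 4*β*Complex.I) * (2*(j:ℂ)+4*α+4*γ+4) / (2*(j:ℂ)+2*α+2*γ+3)) *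
      (Complex.I * (2*(j:ℂ)+2) * ((2*(j:ℂ)+2*α+2*γ+3) - 4*β*Complex.I) / (2*(j:ℂ)+2*α+2*γ+3)) := by
    rw [cM1Hahn1u, if_pos ⟨j+1, by ring⟩, Complex.normSq_add_mul_I]
    have hT' : (2*(j:ℝ)+2*α+2*γ+3) ≠ 0 := by positivity
    have hT2 : (2*(j:ℂ)+2+2*(α:ℂ)+2*(γ:ℂ)+1) ≠ 0 :=
      creal_ne (2*(j:ℝ)+2+2*α+2*γ+1) _ (by push_cast; ring) (by positivity)
    push_cast
    field_simp
    ring_nf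
    try simp only [Complex.I_sq, I3, I4]
    try ring_nf
    try ring
  rw [hv]
  exact h

lemma part2_odd_pos (hα : 0 < α) (hγ : 0 < γ) (β : ℝ) (k : ℕ) :
    Tendsto (fun ε : ℝ => (1/4 : ℂ) * cqHahnA α β γ (2*k+2) ε * cqHahnC α β γ (2*k+3) ε)
      (𝓝[>] (0:ℝ)) (𝓝 ((cM1Hahn1u α β γ (2*k+3) : ℝ) : ℂ)) := by
  have hC : (2*k+3) = 2*(k+1)+1 := by ring
  have h := ((limA_even hα hγ β k).const_mul (1/4 : ℂ)).mul
    (by rw [hC]; exact_mod_cast limC_odd hα hγ β (k+1) :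
      Tendsto (fun ε : ℝ => cqHahnC α β γ (2*k+3) ε) (𝓝[>] (0:ℝ)) (𝓝 (Complex.I * (2*((k:ℂ)+1)+4*γ+2))))
  have hv : ((cM1Hahn1u α β γ (2*k+3) : ℝ) : ℂ) =
      (1/4 : ℂ) * (-Complex.I * (2*(k:ℂ)+2+4*α+2)) * (Complex.I * (2*((k:ℂ)+1)+4*γ+2)) := by
    rw [cM1Hahn1u, if_neg (by rw [Nat.even_iff]; omega)]
    have hT4 : (2*(k:ℂ)+3+2*(α:ℂ)+2*(γ:ℂ)+1) ≠ 0 :=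
      creal_ne (2*(k:ℝ)+3+2*α+2*γ+1) _ (by push_cast; ring) (by positivity)
    push_cast
    field_simp
    ring_nf
    try simp only [Complex.I_sq, I3, I4]
    try ring_nf
    try ring
  rw [hv]
  exact h

lemma part2_one (hα : 0 < α) (hγ : 0 < γ) (β : ℝ) :
    Tendsto (fun ε : ℝ => (1/4 : ℂ) * cqHahnA α β γ 0 ε * cqHahnC α β γ 1 ε)
      (𝓝[>] (0:ℝ)) (𝓝 ((cM1Hahn1u α β γ 1 : ℝ) : ℂ)) := by
  have h := ((limA_zero hα hγ β).const_mul (1/4 : ℂ)).mul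
    (by exact limC_odd hα hγ β 0 :
      Tendsto (fun ε : ℝ => cqHahnC α β γ 1 ε) (𝓝[>] (0:ℝ)) (𝓝 (Complex.I * (2*((0:ℕ):ℂ)+4*γ+2))))
  have hv : ((cM1Hahn1u α β γ 1 : ℝ) : ℂ) =
      (1/4 : ℂ) * (-Complex.I * (4*(α:ℂ)+2)) * (Complex.I * (2*((0:ℕ):ℂ)+4*γ+2)) := by
    rw [cM1Hahn1u, if_neg (by rw [Nat.even_iff]; omega)]
    have hT5 : ((1:ℂ)+2*(α:ℂ)+2*(γ:ℂ)+1) ≠ 0 :=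
      creal_ne (1+2*α+2*γ+1) _ (by push_cast; ring) (by positivity)
    push_cast
    rw [mul_div_mul_right _ _ (pow_ne_zero 2 hT5)]
    ring_nf
    simp only [Complex.I_sq]
    ring
  rw [hv]
  exact h

lemma part2_zero (β : ℝ) :
    Tendsto (fun ε : ℝ => (1/4 : ℂ) * cqHahnA α β γ 0 ε * cqHahnC α β γ 0 ε)
      (𝓝[>] (0:ℝ)) (𝓝 ((cM1Hahn1u α β γ 0 : ℝ) : ℂ)) := by
  have hv : ((cM1Hahn1u α β γ 0 : ℝ) : ℂ) = 0 := by
    rw [cM1Hahn1u, if_pos Even.zero]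
    norm_num
  rw [hv]
  refine Filter.Tendsto.congr (fun ε => ?_) (tendsto_const_nhds (x := (0:ℂ)))
  rw [C_zero]
  ring

end CqAux

set_option maxHeartbeats 3000000 in
/-- the `q → -1` limit of the monic continuous `q`-Hahn recurrence
coefficients (with `q = -e^ε`, `a = e^{ε(2α+1)}`, `b = e^{ε(2γ+1)}`, `φ = π/2 + 2εβ`)
yields the recurrence coefficients of the continuous `-1` Hahn polynomials of type 1. -/
theorem continuousQHahn_to_continuousM1Hahn_limit
    (n : ℕ) (α β γ : ℝ) (hα : α > 0) (hγ : γ > 0) :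
    Tendsto (fun ε : ℝ =>
        let q : ℂ := (-Real.exp ε : ℝ);
        let a : ℂ := (Real.exp (ε * (2 * α + 1)) : ℝ);
        let φ : ℝ := Real.pi / 2 + 2 * ε * β;
        (1 / 2 : ℂ) * ((a * Complex.exp (Complex.I * (φ : ℂ)) +
            a⁻¹ * Complex.exp (-(Complex.I * (φ : ℂ)))) / (1 + q)
          - (cqHahnA α β γ n ε + cqHahnC α β γ n ε)))
      (nhdsWithin 0 (Set.Ioi 0)) (nhds ((cM1Hahn1b α β γ n : ℝ) : ℂ)) ∧
    Tendsto (fun ε : ℝ => (1 / 4 : ℂ) * cqHahnA α β γ (n - 1) ε * cqHahnC α β γ n ε)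
      (nhdsWithin 0 (Set.Ioi 0)) (nhds ((cM1Hahn1u α β γ n : ℝ) : ℂ)) := by
  constructor
  · rcases Nat.even_or_odd' n with ⟨m, rfl | rfl⟩
    · rcases m with _ | j
      · exact part1_zero hα hγ β
      · rw [show 2*(j+1) = 2*j+2 from by ring]
        exact part1_even hα hγ β j
    · exact part1_odd hα hγ β m
  · rcases Nat.even_or_odd' n with ⟨m, rfl | rfl⟩
    · rcases m with _ | j
      · exact part2_zero (α := α) (γ := γ) β
      · rw [show 2*(j+1) = 2*j+2 from by ring]
        exact part2_even hα hγ β j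
    · rcases m with _ | j
      · exact part2_one hα hγ β
      · rw [show 2*(j+1)+1 = 2*j+3 from by ring]
        exact part2_odd_pos hα hγ β j
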